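/- If T : X → Y is a bounded linear operator between Hilbert spaces and f ∈ ker(T)ᗮ is orthogonal to the kernel of T, then as α → 0⁺ the Tikhonov approximations f_α = (T*T + αI)⁻¹ T* (T f) satisfy ‖f_α‖ ≤ ‖f‖ for all α > 0. -/

import Mathlib

open scoped InnerProductSpace

/-- The regularized normal operator `T*T + αI`. -/
noncomputable def regOp {X Y : Type*} [NormedAddCommGroup X] [InnerProductSpace ℂ X]
    [CompleteSpace X] [NormedAddCommGroup Y] [InnerProductSpace ℂ Y] [CompleteSpace Y]
    (T : X →L[ℂ] Y) (α : ℝ) : X →L[ℂ] X :=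
  (ContinuousLinearMap.adjoint T).comp T + (α : ℂ) • (1 : X →L[ℂ] X)

/-- For `f ⟂ ker T`, the Tikhonov approximations `f_α = (T*T + αI)⁻¹ T*(Tf)` satisfy
`‖f_α‖ ≤ ‖f‖` for all `α > 0`. -/
theorem stmt5 {X Y : Type*} [NormedAddCommGroup X] [InnerProductSpace ℂ X]
    [CompleteSpace X] [NormedAddCommGroup Y] [InnerProductSpace ℂ Y] [CompleteSpace Y]
    (T : X →L[ℂ] Y) (f : X) (hf : f ∈ (LinearMap.ker (T : X →ₗ[ℂ] Y))ᗮ)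
    (S : ℝ → X →L[ℂ] X)
    (hS : ∀ α : ℝ, 0 < α → (S α).comp (regOp T α) = 1 ∧ (regOp T α).comp (S α) = 1) :
    ∀ α : ℝ, 0 < α → ‖S α ((ContinuousLinearMap.adjoint T) (T f))‖ ≤ ‖f‖ := by
  intro α hα
  set g := S α ((ContinuousLinearMap.adjoint T) (T f)) with hgdef
  -- regOp T α g = T* (T f)
  have hg : regOp T α g = (ContinuousLinearMap.adjoint T) (T f) := by
    have h := (hS α hα).2
    have := congrArg (fun (A : X →L[ℂ] X) => A ((ContinuousLinearMap.adjoint T) (T f))) h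
    simpa [ContinuousLinearMap.comp_apply] using this
  have hg' : (α : ℂ) • g = (ContinuousLinearMap.adjoint T) (T (f - g)) := by
    have : (ContinuousLinearMap.adjoint T) (T g) + (α : ℂ) • g
        = (ContinuousLinearMap.adjoint T) (T f) := by
      simpa [regOp, ContinuousLinearMap.add_apply, ContinuousLinearMap.comp_apply,
        ContinuousLinearMap.smul_apply] using hg
    rw [map_sub, map_sub]
    linear_combination (norm := abel) this
  -- α * ⟪g, f - g⟫ = ‖T (f - g)‖²
  have key : (α : ℂ) * ⟪g, f - g⟫_ℂ = (‖T (f - g)‖ : ℂ) ^ 2 := by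
    have h1 : ⟪(α : ℂ) • g, f - g⟫_ℂ = ⟪T (f - g), T (f - g)⟫_ℂ := by
      rw [hg', ContinuousLinearMap.adjoint_inner_left]
    rw [inner_smul_left] at h1
    simp only [Complex.conj_ofReal] at h1
    rw [h1, inner_self_eq_norm_sq_to_K]
    norm_cast
  have hre : 0 ≤ Complex.re ⟪g, f - g⟫_ℂ := by
    have := congrArg Complex.re key
    simp only [Complex.mul_re, Complex.ofReal_re, Complex.ofReal_im, zero_mul, sub_zero] at this
    have h2 : (0:ℝ) ≤ α * Complex.re ⟪g, f - g⟫_ℂ := by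
      rw [this]
      norm_cast
      positivity
    nlinarith
  have hsplit : Complex.re ⟪g, f⟫_ℂ = ‖g‖ ^ 2 + Complex.re ⟪g, f - g⟫_ℂ := by
    have : ⟪g, f⟫_ℂ = ⟪g, g⟫_ℂ + ⟪g, f - g⟫_ℂ := by
      rw [← inner_add_right]
      congr 1
      abel
    rw [this]
    rw [inner_self_eq_norm_sq_to_K g]
    simp
    norm_cast
    ring
  have hcs : Complex.re ⟪g, f⟫_ℂ ≤ ‖g‖ * ‖f‖ := by
    calc Complex.re ⟪g, f⟫_ℂ ≤ ‖⟪g, f⟫_ℂ‖ := RCLike.re_le_norm (K := ℂ) _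
    _ ≤ ‖g‖ * ‖f‖ := norm_inner_le_norm g f
  have hfin : ‖g‖ ^ 2 ≤ ‖g‖ * ‖f‖ := by linarith
  nlinarith [norm_nonneg g, norm_nonneg f]
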